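/- If σ, σ' ∈ Ξ first differ at index n, then ‖Φ(σ) − Φ(σ')‖ ≥ s_n τ − κ R_n, where R_n = ∑_{i>n} s_i. -/

import Mathlib

/-- If `σ, σ'` first differ at index `n`, then
`‖Φ(σ) − Φ(σ')‖ ≥ sₙ τ − κ Rₙ`, where `Rₙ = ∑_{i>n} sᵢ`. -/
theorem stmt_1 (p N : ℕ) (hN : 0 < N)
    (s : ℕ → ℝ) (hs : ∀ n, 0 < s n) (hsum : Summable s)
    (d : ℕ → Fin N → EuclideanSpace ℝ (Fin p))
    (hzero : ∀ n, d n ⟨0, hN⟩ = 0)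
    (κ τ : ℝ) (hτ : 0 < τ)
    (hκ : ∀ (n : ℕ) (i j : Fin N), i ≠ j → ‖d n i - d n j‖ ≤ κ)
    (hτd : ∀ (n : ℕ) (i j : Fin N), i ≠ j → τ ≤ ‖d n i - d n j‖)
    (R : ℕ → ℝ) (hR : ∀ n, R n = ∑' i, s (n + 1 + i))
    (σ σ' : ℕ → Fin N) (n : ℕ)
    (hdiff : σ n ≠ σ' n) (hagree : ∀ i < n, σ i = σ' i) :
    s n * τ - κ * R n ≤ ‖(∑' i, s i • d i (σ i)) - ∑' i, s i • d i (σ' i)‖ := by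
  have hκ0 : 0 < κ := lt_of_lt_of_le hτ (le_trans (hτd n _ _ hdiff) (hκ n _ _ hdiff))
  set f : ℕ → EuclideanSpace ℝ (Fin p) := fun i => s i • (d i (σ i) - d i (σ' i)) with hf
  have hbound : ∀ i, ‖f i‖ ≤ κ * s i := by
    intro i
    rw [hf]
    simp only [norm_smul, Real.norm_eq_abs, abs_of_pos (hs i)]
    rw [mul_comm]
    refine mul_le_mul_of_nonneg_right ?_ (hs i).le
    by_cases h : σ i = σ' i
    · simp only [h, sub_self, norm_zero]; exact hκ0.le
    · exact hκ i _ _ h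
  have hfs : Summable f :=
    Summable.of_norm_bounded (hsum.mul_left κ) hbound
  -- summability of each series
  have hg : ∀ ρ : ℕ → Fin N, Summable (fun i => s i • d i (ρ i)) := by
    intro ρ
    refine Summable.of_norm_bounded (hsum.mul_left κ) ?_
    intro i
    simp only [norm_smul, Real.norm_eq_abs, abs_of_pos (hs i)]
    rw [mul_comm]
    refine mul_le_mul_of_nonneg_right ?_ (hs i).le
    by_cases h : ρ i = ⟨0, hN⟩
    · simp only [h, hzero, norm_zero]; exact hκ0.le
    · have := hκ i (ρ i) ⟨0, hN⟩ h
      rwa [hzero, sub_zero] at this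
  have hdiffsum : (∑' i, s i • d i (σ i)) - ∑' i, s i • d i (σ' i) = ∑' i, f i := by
    rw [← Summable.tsum_sub (hg σ) (hg σ')]
    exact tsum_congr fun i => (smul_sub _ _ _).symm
  rw [hdiffsum]
  have hsplit : (∑ i ∈ Finset.range (n + 1), f i) + ∑' i, f (i + (n + 1)) = ∑' i, f i :=
    Summable.sum_add_tsum_nat_add (n + 1) hfs
  have hfin : ∑ i ∈ Finset.range (n + 1), f i = f n := by
    rw [Finset.sum_range_succ]
    have : ∑ i ∈ Finset.range n, f i = 0 := by
      apply Finset.sum_eq_zero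
      intro i hi
      simp [hf, hagree i (Finset.mem_range.mp hi)]
    rw [this, zero_add]
  have htail : ‖∑' i, f (i + (n + 1))‖ ≤ κ * R n := by
    have h1 : ‖∑' i, f (i + (n + 1))‖ ≤ ∑' i, κ * s (i + (n + 1)) := by
      refine norm_tsum_le_tsum_norm ?_ |>.trans ?_
      · exact (hfs.norm.comp_injective (add_left_injective (n + 1)))
      · exact Summable.tsum_le_tsum (fun i => hbound _)
          (hfs.norm.comp_injective (add_left_injective (n + 1)))
          ((hsum.mul_left κ).comp_injective (add_left_injective (n + 1)))
    rw [hR n]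
    calc ‖∑' i, f (i + (n + 1))‖ ≤ ∑' i, κ * s (i + (n + 1)) := h1
      _ = κ * ∑' i, s (i + (n + 1)) := by rw [tsum_mul_left]
      _ = κ * ∑' i, s (n + 1 + i) := by
          congr 1; exact tsum_congr fun i => by rw [add_comm]
  have hfn : s n * τ ≤ ‖f n‖ := by
    rw [hf]
    simp only [norm_smul, Real.norm_eq_abs, abs_of_pos (hs n)]
    exact mul_le_mul_of_nonneg_left (hτd n _ _ hdiff) (hs n).le
  rw [← hsplit, hfin]
  have h2 := norm_add_le (f n + ∑' i, f (i + (n + 1))) (-(∑' i, f (i + (n + 1))))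
  simp only [add_neg_cancel_right, norm_neg] at h2
  linarith
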